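/- Let d1 = (4,3,6,9,8,7,6,5,4,3,2,1,0,0,0,0,0,0,0,0,0), d2 = (1,1,2,3,3,3,3,3,3,3,3,3,3,4,5,6,4,2,3,0,0), d3 = (0,1,1,1,1,1,1,1,1,1,1,1,1,2,3,4,3,2,2,1,0), d4 = (0,0,0,0,0,0,0,0,0,0,0,0,0,1,2,3,2,1,2,0,1) in ℤ^21. Then d1ᵀG′d1 = 4, and d1 − d2 = r̃, d2 − d3 = r_S, d3 − d4 = r_T − r_S; in particular d1, d2, d3, d4 are pairwise congruent modulo the ℤ-span of {r̃, r_S, r_T}. (These are the four linearly equivalent divisors of self-intersection 4 giving the quartic normal form of an M-polarised K3 surface in ℙ³.) -/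

import Mathlib

/-- Adjacency relation of the dual graph: edges `{i, i+1}` for `1 ≤ i ≤ 16`,
together with `{0, 3}` and `{15, 18}`. -/
def adj (i j : ℕ) : Bool :=
  (1 ≤ i && i ≤ 16 && j == i + 1) || (1 ≤ j && j ≤ 16 && i == j + 1) ||
  (i == 0 && j == 3) || (i == 3 && j == 0) || (i == 15 && j == 18) || (i == 18 && j == 15)

/-- The Gram matrix of the 19 classes `E_0, …, E_18`. -/
def G : Matrix (Fin 19) (Fin 19) ℤ :=
  Matrix.of fun i j => if i = j then -2 else if adj i.val j.val then 1 else 0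

/-- The entries of `G'` in the rows and columns indexed by 19 (the curve `S`)
and 20 (the curve `T`). -/
def ext (i j : ℕ) : ℤ :=
  if i = 19 then
    (if j = 19 then 0 else if j = 20 then 2 else if j = 1 ∨ j = 17 then 1 else 0)
  else if i = 20 then
    (if j = 19 then 2 else if j = 20 then 2 else if j = 0 ∨ j = 18 then 1 else 0)
  else if j = 19 then (if i = 1 ∨ i = 17 then 1 else 0)
  else (if i = 0 ∨ i = 18 then 1 else 0)

/-- The 21×21 Gram matrix `G'` of the classes `E_0, …, E_18, S, T`. -/
def G' : Matrix (Fin 21) (Fin 21) ℤ :=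
  Matrix.of fun i j =>
    if h : i.val < 19 ∧ j.val < 19 then G ⟨i.val, h.1⟩ ⟨j.val, h.2⟩ else ext i.val j.val

/-- The relation vector `r̃ = (r, 0, 0) ∈ ℤ^21`. -/
def rt : Fin 21 → ℤ :=
  ![3, 2, 4, 6, 5, 4, 3, 2, 1, 0, -1, -2, -3, -4, -5, -6, -4, -2, -3, 0, 0]

/-- The relation vector `r_S = (s, -1, 0) ∈ ℤ^21`. -/
def rS : Fin 21 → ℤ :=
  ![1, 0, 1, 2, 2, 2, 2, 2, 2, 2, 2, 2, 2, 2, 2, 2, 1, 0, 1, -1, 0]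

/-- The relation vector `r_T = (t, 0, -1) ∈ ℤ^21`. -/
def rT : Fin 21 → ℤ :=
  ![1, 1, 2, 3, 3, 3, 3, 3, 3, 3, 3, 3, 3, 3, 3, 3, 2, 1, 1, 0, -1]

/-- The divisor `d1`. -/
def d1 : Fin 21 → ℤ :=
  ![4, 3, 6, 9, 8, 7, 6, 5, 4, 3, 2, 1, 0, 0, 0, 0, 0, 0, 0, 0, 0]

/-- The divisor `d2`. -/
def d2 : Fin 21 → ℤ :=
  ![1, 1, 2, 3, 3, 3, 3, 3, 3, 3, 3, 3, 3, 4, 5, 6, 4, 2, 3, 0, 0]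

/-- The divisor `d3`. -/
def d3 : Fin 21 → ℤ :=
  ![0, 1, 1, 1, 1, 1, 1, 1, 1, 1, 1, 1, 1, 2, 3, 4, 3, 2, 2, 1, 0]

/-- The divisor `d4`. -/
def d4 : Fin 21 → ℤ :=
  ![0, 0, 0, 0, 0, 0, 0, 0, 0, 0, 0, 0, 0, 1, 2, 3, 2, 1, 2, 0, 1]

/-- The four linearly equivalent divisors of self-intersection 4 giving the
quartic normal form: `d1ᵀ G' d1 = 4`, `d1 - d2 = r̃`, `d2 - d3 = r_S`,
`d3 - d4 = r_T - r_S`, and the `dᵢ` are pairwise congruent modulo the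
`ℤ`-span of `{r̃, r_S, r_T}`. -/
theorem quartic_divisors :
    dotProduct d1 (G'.mulVec d1) = 4 ∧
    d1 - d2 = rt ∧ d2 - d3 = rS ∧ d3 - d4 = rT - rS ∧
    ∀ i j : Fin 4, (![d1, d2, d3, d4] i) - (![d1, d2, d3, d4] j) ∈
      Submodule.span ℤ ({rt, rS, rT} : Set (Fin 21 → ℤ)) := by
  refine ⟨by decide, by decide, by decide, by decide, ?_⟩
  have hrt : rt ∈ Submodule.span ℤ ({rt, rS, rT} : Set (Fin 21 → ℤ)) :=
    Submodule.subset_span (by simp)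
  have hrS : rS ∈ Submodule.span ℤ ({rt, rS, rT} : Set (Fin 21 → ℤ)) :=
    Submodule.subset_span (by simp)
  have hrT : rT ∈ Submodule.span ℤ ({rt, rS, rT} : Set (Fin 21 → ℤ)) :=
    Submodule.subset_span (by simp)
  have e12 : d1 - d2 = rt := by decide
  have e13 : d1 - d3 = rt + rS := by decide
  have e14 : d1 - d4 = rt + rT := by decide
  have e23 : d2 - d3 = rS := by decide
  have e24 : d2 - d4 = rT := by decide
  have e34 : d3 - d4 = rT - rS := by decide
  intro i j
  fin_cases i <;> fin_cases j
  · exact sub_self d1 ▸ Submodule.zero_mem _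
  · show d1 - d2 ∈ _; rw [e12]; exact hrt
  · show d1 - d3 ∈ _; rw [e13]; exact add_mem hrt hrS
  · show d1 - d4 ∈ _; rw [e14]; exact add_mem hrt hrT
  · show d2 - d1 ∈ _; rw [show d2 - d1 = -(d1 - d2) by ring, e12]; exact neg_mem hrt
  · exact sub_self d2 ▸ Submodule.zero_mem _
  · show d2 - d3 ∈ _; rw [e23]; exact hrS
  · show d2 - d4 ∈ _; rw [e24]; exact hrT
  · show d3 - d1 ∈ _; rw [show d3 - d1 = -(d1 - d3) by ring, e13]; exact neg_mem (add_mem hrt hrS)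
  · show d3 - d2 ∈ _; rw [show d3 - d2 = -(d2 - d3) by ring, e23]; exact neg_mem hrS
  · exact sub_self d3 ▸ Submodule.zero_mem _
  · show d3 - d4 ∈ _; rw [e34]; exact sub_mem hrT hrS
  · show d4 - d1 ∈ _; rw [show d4 - d1 = -(d1 - d4) by ring, e14]; exact neg_mem (add_mem hrt hrT)
  · show d4 - d2 ∈ _; rw [show d4 - d2 = -(d2 - d4) by ring, e24]; exact neg_mem hrT
  · show d4 - d3 ∈ _; rw [show d4 - d3 = -(d3 - d4) by ring, e34]; exact neg_mem (sub_mem hrT hrS)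
  · exact sub_self d4 ▸ Submodule.zero_mem _
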